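/- Let 1 < p < ∞ and let 0 < λ ≤ 1 be real. Let C₁ be a bounded linear operator on L^p[0,1] (complex-valued) satisfying (C₁f)(x) = (1/x)∫₀ˣ f(t) dt for almost every x ∈ [0,1] and every f ∈ L^p[0,1]. Then there exists a nonzero bounded linear operator X₀ on L^p[0,1] with operator norm ‖X₀‖ ≤ λ^{1/p} such that (X₀f)(x) = x^{(1−λ)/λ} f(x^{1/λ}) for almost every x ∈ [0,1] and every f ∈ L^p[0,1], and C₁∘X₀ = λ·(X₀∘C₁). In particular, λ is an extended eigenvalue of C₁. -/

import Mathlib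

open MeasureTheory Set
open scoped ENNReal NNReal

noncomputable section StmtAux

namespace StmtAux

variable {l p : ℝ}

/-- Abbreviation for Lebesgue measure on `[0,1]`. -/
abbrev μ01 : Measure ℝ := volume.restrict (Set.Icc (0:ℝ) 1)

/-- The weighted composition map. -/
def Tfun (l : ℝ) (g : ℝ → ℂ) : ℝ → ℂ := fun x => ((x ^ ((1 - l)/l) : ℝ) : ℂ) * g (x ^ (1/l))

lemma qmp (hl0 : 0 < l) (hl1 : l ≤ 1) :
    Measure.QuasiMeasurePreserving (fun x : ℝ => x ^ (1/l)) μ01 μ01 := by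
  constructor
  · exact (Real.continuous_rpow_const (by positivity)).measurable
  · refine Measure.AbsolutelyContinuous.mk fun s hs h0 => ?_
    rw [Measure.map_apply ((Real.continuous_rpow_const (by positivity)).measurable) hs,
      Measure.restrict_apply ((Real.continuous_rpow_const (by positivity)).measurable hs)]
    rw [Measure.restrict_apply hs] at h0
    have hsub : (fun x : ℝ => x ^ (1/l)) ⁻¹' s ∩ Set.Icc 0 1 ⊆
        {0, 1} ∪ (fun u : ℝ => u ^ l) '' (s ∩ Set.Ioc 0 1) := by
      intro x ⟨hxs, hx0, hx1⟩
      rcases eq_or_lt_of_le hx0 with h | h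
      · exact Or.inl (Or.inl h.symm)
      · refine Or.inr ⟨x ^ (1/l), ⟨hxs, ?_, ?_⟩, ?_⟩
        · exact Real.rpow_pos_of_pos h _
        · exact Real.rpow_le_one hx0 hx1 (by positivity)
        · show (x ^ (1/l)) ^ l = x
          rw [one_div, Real.rpow_inv_rpow hx0 (by positivity : l ≠ 0)]
    refine measure_mono_null hsub ?_
    rw [measure_union_null_iff]
    constructor
    · exact measure_union_null (measure_singleton _) (measure_singleton _)
    · refine MeasureTheory.addHaar_image_eq_zero_of_differentiableOn_of_addHaar_eq_zero
        (μ := volume) ?_ (measure_mono_null (by intro x hx; exact ⟨hx.1, hx.2.1.le, hx.2.2⟩) h0)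
      intro x hx
      exact ((Real.hasDerivAt_rpow_const (Or.inl hx.2.1.ne')).differentiableAt).differentiableWithinAt

lemma Tfun_congr (hl0 : 0 < l) (hl1 : l ≤ 1) {g g' : ℝ → ℂ} (h : g =ᵐ[μ01] g') :
    Tfun l g =ᵐ[μ01] Tfun l g' := by
  filter_upwards [(qmp hl0 hl1).ae_eq_comp h] with x hx
  simp only [Tfun]
  simp only [Function.comp] at hx
  rw [hx]

-- change of variables in lintegral over Ioc 0 a, substituting x = u ^ l
lemma lint_cov (hl0 : 0 < l) {a : ℝ} (ha : 0 ≤ a) (g : ℝ → ℝ≥0∞) :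
    ∫⁻ x in Set.Ioc 0 (a ^ l), g x =
      ∫⁻ u in Set.Ioc 0 a, ENNReal.ofReal (l * u ^ (l - 1)) * g (u ^ l) := by
  have himg : (fun u : ℝ => u ^ l) '' Set.Ioc 0 a = Set.Ioc 0 (a ^ l) := by
    ext y
    constructor
    · rintro ⟨x, ⟨hx0, hxa⟩, rfl⟩
      exact ⟨Real.rpow_pos_of_pos hx0 l, Real.rpow_le_rpow hx0.le hxa hl0.le⟩
    · rintro ⟨hy0, hya⟩
      refine ⟨y ^ l⁻¹, ⟨Real.rpow_pos_of_pos hy0 _, ?_⟩, ?_⟩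
      · calc y ^ l⁻¹ ≤ (a ^ l) ^ l⁻¹ := Real.rpow_le_rpow hy0.le hya (by positivity)
        _ = a := Real.rpow_rpow_inv ha hl0.ne'
      · show (y ^ l⁻¹) ^ l = y
        exact Real.rpow_inv_rpow hy0.le hl0.ne'
  rw [← himg]
  rw [lintegral_image_eq_lintegral_abs_det_fderiv_mul volume measurableSet_Ioc
    (f' := fun x => (1 : ℝ →L[ℝ] ℝ).smulRight (l * x ^ (l - 1)))
    (fun x hx => ((Real.hasDerivAt_rpow_const (Or.inl hx.1.ne')).hasDerivWithinAt).hasFDerivWithinAt)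
    (fun x hx y hy hxy => by
      have := congrArg (fun z : ℝ => z ^ l⁻¹) hxy
      simpa [Real.rpow_rpow_inv hx.1.le hl0.ne', Real.rpow_rpow_inv hy.1.le hl0.ne'] using this)
    g]
  refine setLIntegral_congr_fun measurableSet_Ioc (fun x hx => ?_)
  rw [ContinuousLinearMap.smulRight_one_eq_toSpanSingleton, ContinuousLinearMap.det_toSpanSingleton, abs_of_nonneg (mul_nonneg hl0.le (Real.rpow_nonneg hx.1.le _))]

-- Bochner version
lemma int_cov (hl0 : 0 < l) {a : ℝ} (ha : 0 ≤ a) (g : ℝ → ℂ) :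
    ∫ x in Set.Ioc 0 (a ^ l), g x =
      ∫ u in Set.Ioc 0 a, (l * u ^ (l - 1)) • g (u ^ l) := by
  have himg : (fun u : ℝ => u ^ l) '' Set.Ioc 0 a = Set.Ioc 0 (a ^ l) := by
    ext y
    constructor
    · rintro ⟨x, ⟨hx0, hxa⟩, rfl⟩
      exact ⟨Real.rpow_pos_of_pos hx0 l, Real.rpow_le_rpow hx0.le hxa hl0.le⟩
    · rintro ⟨hy0, hya⟩
      refine ⟨y ^ l⁻¹, ⟨Real.rpow_pos_of_pos hy0 _, ?_⟩, ?_⟩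
      · calc y ^ l⁻¹ ≤ (a ^ l) ^ l⁻¹ := Real.rpow_le_rpow hy0.le hya (by positivity)
        _ = a := Real.rpow_rpow_inv ha hl0.ne'
      · show (y ^ l⁻¹) ^ l = y
        exact Real.rpow_inv_rpow hy0.le hl0.ne'
  rw [← himg]
  rw [integral_image_eq_integral_abs_deriv_smul measurableSet_Ioc
    (fun x hx => ((Real.hasDerivAt_rpow_const (Or.inl hx.1.ne')).hasDerivWithinAt))
    (fun x hx y hy hxy => by
      have := congrArg (fun z : ℝ => z ^ l⁻¹) hxy
      simpa [Real.rpow_rpow_inv hx.1.le hl0.ne', Real.rpow_rpow_inv hy.1.le hl0.ne'] using this)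
    g]
  refine setIntegral_congr_fun measurableSet_Ioc fun x hx => ?_
  rw [abs_of_nonneg (mul_nonneg hl0.le (Real.rpow_nonneg hx.1.le _))]

lemma rpow_rpow_aux (hl0 : 0 < l) {u : ℝ} (hu : 0 ≤ u) :
    (u ^ l) ^ ((1 - l)/l) = u ^ (1 - l) ∧ (u ^ l) ^ (1/l) = u := by
  constructor
  · rw [← Real.rpow_mul hu]
    congr 1
    field_simp
  · rw [one_div, Real.rpow_rpow_inv hu hl0.ne']

lemma lint_bound (hl0 : 0 < l) (hl1 : l ≤ 1) (hp : 1 < p) (g : ℝ → ℂ) :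
    (∫⁻ x in Set.Icc (0:ℝ) 1, (‖Tfun l g x‖₊ : ℝ≥0∞) ^ p)
      ≤ ENNReal.ofReal l * ∫⁻ x in Set.Icc (0:ℝ) 1, (‖g x‖₊ : ℝ≥0∞) ^ p := by
  rw [← MeasureTheory.restrict_Ioc_eq_restrict_Icc]
  have h1 : (1:ℝ) = 1 ^ l := (Real.one_rpow l).symm
  calc (∫⁻ x in Set.Ioc (0:ℝ) 1, (‖(↑(x ^ ((1 - l)/l)) : ℂ) * g (x ^ (1/l))‖₊ : ℝ≥0∞) ^ p)
      = ∫⁻ u in Set.Ioc (0:ℝ) 1, ENNReal.ofReal (l * u ^ (l - 1)) *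
          (‖(↑((u ^ l) ^ ((1 - l)/l)) : ℂ) * g ((u ^ l) ^ (1/l))‖₊ : ℝ≥0∞) ^ p := by
        nth_rewrite 1 [h1]
        exact lint_cov hl0 zero_le_one _
    _ ≤ ∫⁻ u in Set.Ioc (0:ℝ) 1, ENNReal.ofReal l * (‖g u‖₊ : ℝ≥0∞) ^ p := by
        refine lintegral_mono_ae ?_
        filter_upwards [ae_restrict_mem measurableSet_Ioc] with u hu
        obtain ⟨e1, e2⟩ := rpow_rpow_aux hl0 hu.1.le
        rw [e1, e2, nnnorm_mul, ENNReal.coe_mul,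
          ENNReal.mul_rpow_of_nonneg _ _ (by linarith : (0:ℝ) ≤ p), ← mul_assoc]
        gcongr ?_ * _
        have hnn : (‖(↑(u ^ (1 - l)) : ℂ)‖₊ : ℝ≥0∞) = ENNReal.ofReal (u ^ (1 - l)) := by
          rw [Complex.nnnorm_real]
          simp [Real.nnnorm_of_nonneg (Real.rpow_nonneg hu.1.le _), ENNReal.ofReal,
            Real.toNNReal_of_nonneg (Real.rpow_nonneg hu.1.le _)]
        rw [hnn, ENNReal.ofReal_rpow_of_nonneg (Real.rpow_nonneg hu.1.le _) (by linarith),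
          ← ENNReal.ofReal_mul (mul_nonneg hl0.le (Real.rpow_nonneg hu.1.le _)),
          ← Real.rpow_mul hu.1.le]
        refine ENNReal.ofReal_le_ofReal ?_
        rw [mul_assoc, ← Real.rpow_add hu.1]
        have : u ^ (l - 1 + (1 - l) * p) ≤ 1 :=
          Real.rpow_le_one hu.1.le hu.2 (by nlinarith)
        nlinarith [Real.rpow_nonneg hu.1.le (l - 1 + (1 - l) * p)]
    _ = ENNReal.ofReal l * ∫⁻ u in Set.Ioc (0:ℝ) 1, (‖g u‖₊ : ℝ≥0∞) ^ p :=
        lintegral_const_mul' _ _ ENNReal.ofReal_ne_top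

lemma Tfun_aesm (hl0 : 0 < l) (hl1 : l ≤ 1) {g : ℝ → ℂ}
    (hg : AEStronglyMeasurable g μ01) : AEStronglyMeasurable (Tfun l g) μ01 :=
  ((Complex.continuous_ofReal.comp (Real.continuous_rpow_const
      (div_nonneg (by linarith) hl0.le))).aestronglyMeasurable).mul
    (hg.comp_quasiMeasurePreserving (qmp hl0 hl1))

lemma eLpNorm_Tfun_le (hl0 : 0 < l) (hl1 : l ≤ 1) (hp : 1 < p) (g : ℝ → ℂ) :
    eLpNorm (Tfun l g) (ENNReal.ofReal p) μ01
      ≤ ENNReal.ofReal l ^ (1/p) * eLpNorm g (ENNReal.ofReal p) μ01 := by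
  have hq0 : ENNReal.ofReal p ≠ 0 := by
    simp [ENNReal.ofReal_eq_zero]; linarith
  have hqt : ENNReal.ofReal p ≠ ∞ := ENNReal.ofReal_ne_top
  rw [eLpNorm_eq_lintegral_rpow_enorm_toReal hq0 hqt, eLpNorm_eq_lintegral_rpow_enorm_toReal hq0 hqt,
    ENNReal.toReal_ofReal (by linarith : (0:ℝ) ≤ p)]
  rw [← ENNReal.mul_rpow_of_nonneg _ _ (by positivity : (0:ℝ) ≤ 1/p)]
  exact ENNReal.rpow_le_rpow (lint_bound hl0 hl1 hp g) (by positivity)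

lemma memLp_Tfun (hl0 : 0 < l) (hl1 : l ≤ 1) (hp : 1 < p) {g : ℝ → ℂ}
    (hg : MemLp g (ENNReal.ofReal p) μ01) : MemLp (Tfun l g) (ENNReal.ofReal p) μ01 := by
  refine ⟨Tfun_aesm hl0 hl1 hg.1, lt_of_le_of_lt (eLpNorm_Tfun_le hl0 hl1 hp g) ?_⟩
  exact ENNReal.mul_lt_top (ENNReal.rpow_lt_top_of_nonneg (by positivity) ENNReal.ofReal_ne_top)
    hg.2

end StmtAux

end StmtAux
open MeasureTheory Set
open scoped ENNReal NNReal

theorem stmt5 (p : ℝ) (hp : 1 < p) [Fact (1 ≤ ENNReal.ofReal p)]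
    (l : ℝ) (hl0 : 0 < l) (hl1 : l ≤ 1)
    (C₁ : Lp ℂ (ENNReal.ofReal p) (volume.restrict (Set.Icc (0:ℝ) 1)) →L[ℂ]
          Lp ℂ (ENNReal.ofReal p) (volume.restrict (Set.Icc (0:ℝ) 1)))
    (hC₁ : ∀ f, ∀ᵐ (x : ℝ) ∂(volume.restrict (Set.Icc (0:ℝ) 1)),
      (C₁ f : ℝ → ℂ) x = (x : ℂ)⁻¹ * ∫ t in Set.Ioc (0:ℝ) x, (f : ℝ → ℂ) t) :
    ∃ X₀ : Lp ℂ (ENNReal.ofReal p) (volume.restrict (Set.Icc (0:ℝ) 1)) →L[ℂ]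
           Lp ℂ (ENNReal.ofReal p) (volume.restrict (Set.Icc (0:ℝ) 1)),
      X₀ ≠ 0 ∧ ‖X₀‖ ≤ l ^ (1/p) ∧
      (∀ f, ∀ᵐ (x : ℝ) ∂(volume.restrict (Set.Icc (0:ℝ) 1)),
        (X₀ f : ℝ → ℂ) x = ((x ^ ((1 - l)/l) : ℝ) : ℂ) * (f : ℝ → ℂ) (x ^ (1/l))) ∧
      C₁.comp X₀ = (l : ℂ) • (X₀.comp C₁) := by
  classical
  have hmem : ∀ f : Lp ℂ (ENNReal.ofReal p) StmtAux.μ01,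
      MemLp (StmtAux.Tfun l ⇑f) (ENNReal.ofReal p) StmtAux.μ01 :=
    fun f => StmtAux.memLp_Tfun hl0 hl1 hp (Lp.memLp f)
  let L : Lp ℂ (ENNReal.ofReal p) StmtAux.μ01 →ₗ[ℂ] Lp ℂ (ENNReal.ofReal p) StmtAux.μ01 :=
    { toFun := fun f => (hmem f).toLp _
      map_add' := fun f g => by
        rw [← MemLp.toLp_add (hmem f) (hmem g)]
        refine MemLp.toLp_congr _ _ ?_
        refine (StmtAux.Tfun_congr hl0 hl1 (Lp.coeFn_add f g)).trans ?_
        refine Filter.Eventually.of_forall fun x => ?_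
        simp [StmtAux.Tfun, mul_add]
      map_smul' := fun c f => by
        show (hmem (c • f)).toLp _ = c • (hmem f).toLp _
        rw [← MemLp.toLp_const_smul c (hmem f)]
        exact MemLp.toLp_congr (hmem _) ((hmem f).const_smul c)
          ((StmtAux.Tfun_congr hl0 hl1 (Lp.coeFn_smul c f)).trans
            (Filter.Eventually.of_forall fun x => by
              simp [StmtAux.Tfun, smul_eq_mul]
              ring)) }
  have hbound : ∀ f, ‖(hmem f).toLp _‖ ≤ l ^ (1/p) * ‖f‖ := fun f => by
    rw [Lp.norm_toLp _ (hmem f), Lp.norm_def]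
    have hle := StmtAux.eLpNorm_Tfun_le hl0 hl1 hp (⇑f)
    have hfin : (ENNReal.ofReal l ^ (1/p) *
        eLpNorm (⇑f) (ENNReal.ofReal p) StmtAux.μ01) ≠ ∞ :=
      (ENNReal.mul_lt_top (ENNReal.rpow_lt_top_of_nonneg (by positivity)
        ENNReal.ofReal_ne_top) (Lp.eLpNorm_lt_top f)).ne
    calc (eLpNorm (StmtAux.Tfun l ⇑f) (ENNReal.ofReal p) StmtAux.μ01).toReal
        ≤ (ENNReal.ofReal l ^ (1/p) *
            eLpNorm (⇑f) (ENNReal.ofReal p) StmtAux.μ01).toReal :=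
          ENNReal.toReal_mono hfin hle
      _ = l ^ (1/p) * (eLpNorm (⇑f) (ENNReal.ofReal p) StmtAux.μ01).toReal := by
          rw [ENNReal.toReal_mul, ← ENNReal.toReal_rpow, ENNReal.toReal_ofReal hl0.le]
  refine ⟨L.mkContinuous (l ^ (1/p)) hbound, ?_, LinearMap.mkContinuous_norm_le _ (by positivity) _,
    fun f => ?_, ?_⟩
  · intro h0
    haveI : IsFiniteMeasure (StmtAux.μ01 : Measure ℝ) := by
      constructor
      rw [Measure.restrict_apply_univ]
      simp [Real.volume_Icc]
    set f₀ : Lp ℂ (ENNReal.ofReal p) StmtAux.μ01 := (memLp_const (1:ℂ)).toLp _ with hf₀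
    have hzero : (L.mkContinuous (l ^ (1/p)) hbound) f₀ = 0 := by rw [h0]; rfl
    have h1 : ⇑((L.mkContinuous (l ^ (1/p)) hbound) f₀) =ᵐ[StmtAux.μ01]
        StmtAux.Tfun l ⇑f₀ := (hmem f₀).coeFn_toLp
    have h2 : (⇑f₀) =ᵐ[StmtAux.μ01] fun _ => (1:ℂ) := MemLp.coeFn_toLp _
    have h3 : StmtAux.Tfun l ⇑f₀ =ᵐ[StmtAux.μ01] StmtAux.Tfun l (fun _ => 1) :=
      StmtAux.Tfun_congr hl0 hl1 h2
    have hz : ⇑((L.mkContinuous (l ^ (1/p)) hbound) f₀) =ᵐ[StmtAux.μ01] 0 := by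
      rw [hzero]; exact Lp.coeFn_zero _ _ _
    have hmemIoo : ∀ᵐ x ∂(StmtAux.μ01 : Measure ℝ), x ∈ Set.Ioo (0:ℝ) 1 := by
      have h := ae_restrict_mem (μ := volume) (measurableSet_Ioo (a := (0:ℝ)) (b := 1))
      rwa [MeasureTheory.restrict_Ioo_eq_restrict_Icc] at h
    have hFalse : ∀ᵐ _x ∂(StmtAux.μ01 : Measure ℝ), False := by
      filter_upwards [h1, h3, hz, hmemIoo] with x e1 e3 ez hx
      have e : StmtAux.Tfun l (fun _ => (1:ℂ)) x = 0 := by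
        rw [← e3, ← e1]
        exact ez
      simp only [StmtAux.Tfun, mul_one, Complex.ofReal_eq_zero] at e
      exact absurd e (Real.rpow_pos_of_pos hx.1 _).ne'
    have hne : (StmtAux.μ01 : Measure ℝ) ≠ 0 := by
      intro hμ
      have := congrArg (fun m : Measure ℝ => m Set.univ) hμ
      simp [Measure.restrict_apply_univ, Real.volume_Icc] at this
    exact (MeasureTheory.ae_neBot.mpr hne).ne (Filter.eventually_false_iff_eq_bot.mp hFalse)
  · filter_upwards [(hmem f).coeFn_toLp] with x hx
    exact hx
  · refine ContinuousLinearMap.ext fun f => ?_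
    refine Lp.ext (μ := (StmtAux.μ01 : Measure ℝ)) ?_
    have hmemIoo : ∀ᵐ x ∂(StmtAux.μ01 : Measure ℝ), x ∈ Set.Ioo (0:ℝ) 1 := by
      have h := ae_restrict_mem (μ := volume) (measurableSet_Ioo (a := (0:ℝ)) (b := 1))
      rwa [MeasureTheory.restrict_Ioo_eq_restrict_Icc] at h
    set X := L.mkContinuous (l ^ (1/p)) hbound with hXdef
    have hXf : ⇑(X f) =ᵐ[StmtAux.μ01] StmtAux.Tfun l ⇑f := (hmem f).coeFn_toLp
    have hL : ⇑(C₁ (X f)) =ᵐ[StmtAux.μ01]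
        fun x => (x:ℂ)⁻¹ * ((l:ℂ) * ∫ u in Set.Ioc (0:ℝ) (x ^ (1/l)), (⇑f) u) := by
      filter_upwards [hC₁ (X f), hmemIoo] with x e hx
      rw [e]
      congr 1
      have hstepA : ∫ t in Set.Ioc (0:ℝ) x, (⇑(X f)) t
          = ∫ t in Set.Ioc (0:ℝ) x, StmtAux.Tfun l (⇑f) t :=
        integral_congr_ae (ae_restrict_of_ae_restrict_of_subset
          (Set.Ioc_subset_Icc_self.trans (Set.Icc_subset_Icc_right hx.2.le)) hXf)
      have hxl : (x ^ (1/l)) ^ l = x := by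
        rw [one_div, Real.rpow_inv_rpow hx.1.le hl0.ne']
      have hcov := StmtAux.int_cov hl0 (Real.rpow_nonneg hx.1.le (1/l)) (StmtAux.Tfun l ⇑f)
      rw [hxl] at hcov
      rw [hstepA, hcov, ← MeasureTheory.integral_const_mul]
      refine setIntegral_congr_fun measurableSet_Ioc fun u hu => ?_
      obtain ⟨e1, e2⟩ := StmtAux.rpow_rpow_aux hl0 hu.1.le
      simp only [StmtAux.Tfun]
      rw [e1, e2]
      have h3 : u ^ (l-1) * u ^ (1-l) = 1 := by
        rw [← Real.rpow_add hu.1]; norm_num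
      rw [Complex.real_smul, Complex.ofReal_mul, mul_assoc, ← mul_assoc ((u ^ (l-1) : ℝ) : ℂ),
        ← Complex.ofReal_mul, h3, Complex.ofReal_one, one_mul]
    have hXCf : ⇑(X (C₁ f)) =ᵐ[StmtAux.μ01] StmtAux.Tfun l ⇑(C₁ f) := (hmem (C₁ f)).coeFn_toLp
    have hcomp := (StmtAux.qmp hl0 hl1).ae_eq_comp (hC₁ f)
    have hR : ⇑((l:ℂ) • (X (C₁ f))) =ᵐ[StmtAux.μ01]
        fun x => (x:ℂ)⁻¹ * ((l:ℂ) * ∫ u in Set.Ioc (0:ℝ) (x ^ (1/l)), (⇑f) u) := by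
      filter_upwards [Lp.coeFn_smul (l:ℂ) (X (C₁ f)), hXCf, hcomp, hmemIoo] with x es eX ec hx
      simp only [Function.comp] at ec
      rw [es]
      simp only [Pi.smul_apply, smul_eq_mul]
      rw [eX]
      simp only [StmtAux.Tfun]
      rw [ec]
      have hpow : (x ^ ((1-l)/l) : ℝ) * ((x ^ (1/l) : ℝ))⁻¹ = x⁻¹ := by
        rw [← Real.rpow_neg hx.1.le (1/l), ← Real.rpow_add hx.1]
        rw [show (1-l)/l + -(1/l) = (-1 : ℝ) by field_simp; ring]
        exact Real.rpow_neg_one x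
      have hkey : ((x ^ ((1-l)/l) : ℝ) : ℂ) *
          (((x ^ (1/l) : ℝ) : ℂ)⁻¹ * ∫ t in Set.Ioc (0:ℝ) (x ^ (1/l)), (⇑f) t)
          = ((x : ℝ) : ℂ)⁻¹ * ∫ t in Set.Ioc (0:ℝ) (x ^ (1/l)), (⇑f) t := by
        rw [← mul_assoc, ← Complex.ofReal_inv, ← Complex.ofReal_mul, hpow, Complex.ofReal_inv]
      rw [hkey]
      ring
    show ⇑(C₁ (X f)) =ᵐ[(StmtAux.μ01 : Measure ℝ)] ⇑((l:ℂ) • (X (C₁ f)))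
    exact hL.trans hR.symm
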